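/- Let L̃_N ⊆ H(ℤ_N^g) be the image under the quotient map H(ℤ^g) → H(ℤ_N^g) of the subgroup {(0,q,k) : q ∈ ℤ^g, k ∈ ℤ}, and let χ : L̃_N → ℂ be the character induced by (0,q,k) ↦ e^{kπi/N} (this is well defined on the quotient). Let H_{N,g}(L) be the quotient of the group algebra ℂ[H(ℤ_N^g)] by the linear subspace spanned by the elements χ(u₁)·u − u·u₁ for u ∈ H(ℤ_N^g) and u₁ ∈ L̃_N, let π_L : ℂ[H(ℤ_N^g)] → H_{N,g}(L) be the quotient map, and equip H_{N,g}(L) with the action of H(ℤ_N^g) induced by left multiplication. Then the ℂ-linear map V → H_{N,g}(L) determined by e_μ ↦ π_L[class of (μ,0,0)] (using any lift of μ ∈ (ℤ_N)^g to ℤ^g; the class is independent of the lift) is a well-defined ℂ-linear isomorphism which is H(ℤ_N^g)-equivariant: it intertwines the Schrödinger representation u ↦ σ̄(u) on V with the left regular action on H_{N,g}(L). Its inverse is given by π_L[class of (p,q,k)] ↦ e^{(k−pᵀq)πi/N} e_{p mod N}. -/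

import Mathlib

open Finset

/-- The underlying `ℤ^g × ℤ^g` of the Heisenberg group. -/
abbrev HVec (g : ℕ) := (Fin g → ℤ) × (Fin g → ℤ)

/-- The standard symplectic form `ω((p,q),(p',q')) = Σⱼ (pⱼ q'ⱼ − qⱼ p'ⱼ)`. -/
def symp (g : ℕ) (x y : HVec g) : ℤ := ∑ j, (x.1 j * y.2 j - x.2 j * y.1 j)

lemma symp_add_left (g : ℕ) (x y z : HVec g) :
    symp g (x + y) z = symp g x z + symp g y z := by
  simp only [symp, Prod.fst_add, Prod.snd_add, Pi.add_apply]
  rw [← Finset.sum_add_distrib]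
  exact Finset.sum_congr rfl fun j _ => by ring

lemma symp_add_right (g : ℕ) (x y z : HVec g) :
    symp g x (y + z) = symp g x y + symp g x z := by
  simp only [symp, Prod.fst_add, Prod.snd_add, Pi.add_apply]
  rw [← Finset.sum_add_distrib]
  exact Finset.sum_congr rfl fun j _ => by ring

lemma symp_zero_left (g : ℕ) (y : HVec g) : symp g 0 y = 0 := by
  simp [symp]

lemma symp_zero_right (g : ℕ) (x : HVec g) : symp g x 0 = 0 := by
  simp [symp]

lemma symp_neg_left (g : ℕ) (x y : HVec g) : symp g (-x) y = - symp g x y := by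
  simp only [symp, Prod.fst_neg, Prod.snd_neg, Pi.neg_apply, ← Finset.sum_neg_distrib]
  exact Finset.sum_congr rfl fun j _ => by ring

lemma symp_neg_right (g : ℕ) (x y : HVec g) : symp g x (-y) = - symp g x y := by
  simp only [symp, Prod.fst_neg, Prod.snd_neg, Pi.neg_apply, ← Finset.sum_neg_distrib]
  exact Finset.sum_congr rfl fun j _ => by ring

lemma symp_self (g : ℕ) (x : HVec g) : symp g x x = 0 :=
  Finset.sum_eq_zero fun j _ => by ring

lemma symp_skew (g : ℕ) (x y : HVec g) : symp g x y = - symp g y x := by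
  simp only [symp, ← Finset.sum_neg_distrib]
  exact Finset.sum_congr rfl fun j _ => by ring

lemma symp_smul_left (g : ℕ) (c : ℤ) (x y : HVec g) :
    symp g (c • x) y = c * symp g x y := by
  simp only [symp, Prod.smul_fst, Prod.smul_snd, Pi.smul_apply, smul_eq_mul, Finset.mul_sum]
  exact Finset.sum_congr rfl fun j _ => by ring

lemma symp_smul_right (g : ℕ) (c : ℤ) (x y : HVec g) :
    symp g x (c • y) = c * symp g x y := by
  simp only [symp, Prod.smul_fst, Prod.smul_snd, Pi.smul_apply, smul_eq_mul, Finset.mul_sum]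
  exact Finset.sum_congr rfl fun j _ => by ring

/-- The integral Heisenberg group `H(ℤ^g) = ℤ^g × ℤ^g × ℤ`. -/
def Heis (g : ℕ) := HVec g × ℤ

namespace Heis

variable {g : ℕ}

instance : Mul (Heis g) := ⟨fun a b => (a.1 + b.1, a.2 + b.2 + symp g a.1 b.1)⟩
instance : One (Heis g) := ⟨((0 : HVec g), (0 : ℤ))⟩
instance : Inv (Heis g) := ⟨fun a => (-a.1, -a.2)⟩

lemma mul_def (a b : Heis g) : a * b = (a.1 + b.1, a.2 + b.2 + symp g a.1 b.1) := rfl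
lemma one_def : (1 : Heis g) = ((0 : HVec g), (0 : ℤ)) := rfl
lemma inv_def (a : Heis g) : a⁻¹ = (-a.1, -a.2) := rfl

instance : Group (Heis g) where
  mul_assoc a b c := by
    refine Prod.ext (add_assoc a.1 b.1 c.1) ?_
    show (a.2 + b.2 + symp g a.1 b.1) + c.2 + symp g (a.1 + b.1) c.1
      = a.2 + (b.2 + c.2 + symp g b.1 c.1) + symp g a.1 (b.1 + c.1)
    rw [symp_add_left, symp_add_right]
    ring
  one_mul a := Prod.ext (zero_add a.1) (by
    show (0 : ℤ) + a.2 + symp g 0 a.1 = a.2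
    rw [symp_zero_left]; ring)
  mul_one a := Prod.ext (add_zero a.1) (by
    show a.2 + 0 + symp g a.1 0 = a.2
    rw [symp_zero_right]; ring)
  inv_mul_cancel a := Prod.ext (neg_add_cancel a.1) (by
    show -a.2 + a.2 + symp g (-a.1) a.1 = 0
    rw [symp_neg_left, symp_self]; ring)

end Heis

/-- The normal subgroup `Γ_N = {(Np, Nq, 2Nk)}` of `H(ℤ^g)`. -/
def GammaN (g N : ℕ) (hN : Even N) : Subgroup (Heis g) where
  carrier := {a | (∃ x : HVec g, a.1 = (N : ℤ) • x) ∧ ∃ k : ℤ, a.2 = 2 * N * k}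
  one_mem' := ⟨⟨0, by simp [Heis.one_def]⟩, 0, by simp [Heis.one_def]⟩
  mul_mem' := by
    rintro a b ⟨⟨x, hx⟩, k, hk⟩ ⟨⟨y, hy⟩, l, hl⟩
    obtain ⟨m, hm⟩ := hN
    have hNm : (N : ℤ) = m + m := by exact_mod_cast hm
    refine ⟨⟨x + y, ?_⟩, k + l + m * symp g x y, ?_⟩
    · simp [Heis.mul_def, hx, hy, smul_add]
    · simp only [Heis.mul_def, hx, hy, hk, hl, symp_smul_left, symp_smul_right]
      rw [hNm]; ring
  inv_mem' := by
    rintro a ⟨⟨x, hx⟩, k, hk⟩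
    exact ⟨⟨-x, by simp [Heis.inv_def, hx]⟩, -k, by simp [Heis.inv_def, hk]⟩

instance gammaN_normal (g N : ℕ) (hN : Even N) : (GammaN g N hN).Normal := by
  constructor
  intro n hn x
  obtain ⟨⟨y, hy⟩, k, hk⟩ := hn
  refine ⟨⟨y, ?_⟩, k + symp g x.1 y, ?_⟩
  · show x.1 + n.1 + -x.1 = (N : ℤ) • y
    rw [hy]; abel
  · show x.2 + n.2 + symp g x.1 n.1 + -x.2 + symp g (x.1 + n.1) (-x.1) = 2 * N * (k + symp g x.1 y)
    have h1 : symp g y x.1 = - symp g x.1 y := symp_skew g y x.1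
    rw [hy, hk, symp_add_left, symp_neg_right, symp_neg_right, symp_self, symp_smul_left,
      symp_smul_right, h1]; ring

noncomputable section

/-- The Hilbert space `V` of functions `(ℤ_N)^g → ℂ` with its standard inner product. -/
abbrev ThetaSp (g N : ℕ) [NeZero N] := EuclideanSpace ℂ (Fin g → ZMod N)

/-- The standard orthonormal basis `(e_μ)` of `V`, `μ ∈ (ℤ_N)^g`,
with `e_μ = EuclideanSpace.single μ 1`. -/
def thetaBasis (g N : ℕ) [NeZero N] : Module.Basis (Fin g → ZMod N) ℂ (ThetaSp g N) :=
  (EuclideanSpace.basisFun (Fin g → ZMod N) ℂ).toBasis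

/-- The coefficient `exp(−(πi/N) pᵀq − (2πi/N) μᵀq)`, where `μᵀq` is computed using the
canonical lift `ZMod.val` of `μ` to `ℤ^g`. -/
def schCoeff (g N : ℕ) [NeZero N] (p q : Fin g → ℤ) (μ : Fin g → ZMod N) : ℂ :=
  Complex.exp (-((Real.pi : ℂ) * Complex.I / N) * (∑ j, (p j : ℂ) * (q j : ℂ))
    - (2 * (Real.pi : ℂ) * Complex.I / N) * (∑ j, ((μ j).val : ℂ) * (q j : ℂ)))

/-- The operator `O_{pq}` on `V`, determined by its action on the standard basis:
`O_{pq} e_μ = exp(−(πi/N) pᵀq − (2πi/N) μᵀq) • e_{μ+p}`. -/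
def Opq (g N : ℕ) [NeZero N] (p q : Fin g → ℤ) : ThetaSp g N →L[ℂ] ThetaSp g N :=
  LinearMap.toContinuousLinearMap <|
    (thetaBasis g N).constr ℂ fun μ =>
      schCoeff g N p q μ • EuclideanSpace.single (μ + fun j => ((p j : ZMod N))) (1 : ℂ)

/-- The group algebra `ℂ[H(ℤ_N^g)]`. -/
abbrev HeisAlg (g N : ℕ) (hN : Even N) := MonoidAlgebra ℂ (Heis g ⧸ GammaN g N hN)

/-- The relations `χ(u₁)·u − u·u₁`, for `u ∈ H(ℤ_N^g)` and `u₁ ∈ L̃_N` (i.e. `u₁ = (0,q,k)`),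
where `χ(0,q,k) = e^{kπi/N}`. -/
def thetaRel (g N : ℕ) (hN : Even N) : Set (HeisAlg g N hN) :=
  {z | ∃ (x : Heis g) (q : Fin g → ℤ) (k : ℤ),
    z = Complex.exp ((k : ℂ) * (Real.pi : ℂ) * Complex.I / N) •
          MonoidAlgebra.single (QuotientGroup.mk x) (1 : ℂ)
        - MonoidAlgebra.single
            ((QuotientGroup.mk x : Heis g ⧸ GammaN g N hN) *
              (QuotientGroup.mk ((((0 : Fin g → ℤ), q), k) : Heis g) :
                Heis g ⧸ GammaN g N hN)) (1 : ℂ)}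

/-- The subspace of `ℂ[H(ℤ_N^g)]` spanned by the relations. -/
def thetaW (g N : ℕ) (hN : Even N) : Submodule ℂ (HeisAlg g N hN) :=
  Submodule.span ℂ (thetaRel g N hN)

/-- The model `H_{N,g}(L)` of the space of theta functions as a quotient of `ℂ[H(ℤ_N^g)]`. -/
abbrev HNgL (g N : ℕ) (hN : Even N) := HeisAlg g N hN ⧸ thetaW g N hN

/-- The linear map `V → H_{N,g}(L)` determined by `e_μ ↦ π_L[(μ,0,0)]`, using the canonical
lift `ZMod.val` of `μ` to `ℤ^g`. -/
noncomputable def thetaToH (g N : ℕ) [NeZero N] (hN : Even N) :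
    ThetaSp g N →ₗ[ℂ] HNgL g N hN :=
  (thetaBasis g N).constr ℂ fun μ =>
    (thetaW g N hN).mkQ (MonoidAlgebra.single
      (QuotientGroup.mk (((fun j => ((μ j).val : ℤ)), (0 : Fin g → ℤ)), (0 : ℤ))) (1 : ℂ))
section ThetaAux

variable {g N : ℕ}

/-- reduction mod N -/
def redv (N : ℕ) (p : Fin g → ℤ) : Fin g → ZMod N := fun j => (p j : ZMod N)

/-- canonical lift -/
def liftv {N : ℕ} (μ : Fin g → ZMod N) : Fin g → ℤ := fun j => ((μ j).val : ℤ)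

/-- element constructor with correct type ascription -/
def HeisMk (g : ℕ) (p q : Fin g → ℤ) (k : ℤ) : Heis g := ((p, q), k)

lemma redv_liftv [NeZero N] (μ : Fin g → ZMod N) : redv N (liftv μ) = μ := by
  funext j
  simp [redv, liftv, ZMod.natCast_val, ZMod.cast_id]

lemma dvd_liftv_redv_sub [NeZero N] (a : ℤ) :
    (N : ℤ) ∣ (((a : ZMod N).val : ℤ) - a) := by
  rw [← ZMod.intCast_zmod_eq_zero_iff_dvd]
  push_cast
  simp [ZMod.natCast_val, ZMod.cast_id]

lemma exp_eq_of_dvd (N : ℕ) [NeZero N] (a b : ℤ) (h : (2 * (N:ℤ)) ∣ (a - b)) :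
    Complex.exp ((a : ℂ) * (Real.pi : ℂ) * Complex.I / N) =
      Complex.exp ((b : ℂ) * (Real.pi : ℂ) * Complex.I / N) := by
  obtain ⟨t, ht⟩ := h
  have hN : (N : ℂ) ≠ 0 := by exact_mod_cast (NeZero.ne N)
  have ha : (a : ℂ) = (b : ℂ) + 2 * N * t := by
    have : a = b + 2 * (N:ℤ) * t := by linarith [ht]
    rw [this]; push_cast; ring
  have harg : ((a:ℂ)) * (Real.pi : ℂ) * Complex.I / N
      = (b : ℂ) * (Real.pi : ℂ) * Complex.I / N + (t:ℂ) * (2 * (Real.pi:ℂ) * Complex.I) := by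
    rw [ha]; field_simp
  rw [harg, Complex.exp_add, Complex.exp_int_mul_two_pi_mul_I, mul_one]

lemma mem_gammaN (hN : Even N) (c : Heis g)
    (h1 : ∀ j, (N:ℤ) ∣ c.1.1 j) (h2 : ∀ j, (N:ℤ) ∣ c.1.2 j) (h3 : (2*(N:ℤ)) ∣ c.2) :
    c ∈ GammaN g N hN := by
  refine ⟨⟨(fun j => c.1.1 j / N, fun j => c.1.2 j / N), ?_⟩, ?_⟩
  · refine Prod.ext (funext fun j => ?_) (funext fun j => ?_)
    · exact (Int.mul_ediv_cancel' (h1 j)).symm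
    · exact (Int.mul_ediv_cancel' (h2 j)).symm
  · obtain ⟨m, hm⟩ := h3
    exact ⟨m, hm⟩

lemma mk_eq_mk (hN : Even N) (a b : Heis g)
    (h1 : ∀ j, (N:ℤ) ∣ (b.1.1 j - a.1.1 j)) (h2 : ∀ j, (N:ℤ) ∣ (b.1.2 j - a.1.2 j))
    (h3 : (2*(N:ℤ)) ∣ (b.2 - a.2 - symp g a.1 b.1)) :
    (QuotientGroup.mk a : Heis g ⧸ GammaN g N hN) = QuotientGroup.mk b := by
  rw [QuotientGroup.eq]
  apply mem_gammaN hN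
  · intro j
    have : (a⁻¹ * b).1.1 j = b.1.1 j - a.1.1 j := by
      rw [Heis.mul_def, Heis.inv_def]
      simp [Heis.mul_def, Heis.inv_def]
      ring
    rw [this]; exact h1 j
  · intro j
    have : (a⁻¹ * b).1.2 j = b.1.2 j - a.1.2 j := by
      rw [Heis.mul_def, Heis.inv_def]
      simp [Heis.mul_def, Heis.inv_def]
      ring
    rw [this]; exact h2 j
  · have : (a⁻¹ * b).2 = b.2 - a.2 - symp g a.1 b.1 := by
      rw [Heis.mul_def, Heis.inv_def]
      simp [Heis.mul_def, Heis.inv_def, symp_neg_left]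
      ring
    rw [this]; exact h3

lemma rel_mk (hN : Even N) (x : Heis g) (q : Fin g → ℤ) (k : ℤ) :
    (thetaW g N hN).mkQ (MonoidAlgebra.single
        ((QuotientGroup.mk x : Heis g ⧸ GammaN g N hN) *
          (QuotientGroup.mk (HeisMk g 0 q k))) (1:ℂ))
      = Complex.exp ((k:ℂ) * (Real.pi:ℂ) * Complex.I / N) •
        (thetaW g N hN).mkQ (MonoidAlgebra.single (QuotientGroup.mk x) (1:ℂ)) := by
  rw [← map_smul, eq_comm, ← sub_eq_zero, ← map_sub, Submodule.mkQ_apply,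
    Submodule.Quotient.mk_eq_zero]
  exact Submodule.subset_span ⟨x, q, k, rfl⟩

lemma key (hN : Even N) [NeZero N] (p q : Fin g → ℤ) (k : ℤ) :
    (thetaW g N hN).mkQ (MonoidAlgebra.single (QuotientGroup.mk ((p,q),k)) (1:ℂ))
      = Complex.exp (((k - ∑ j, p j * q j : ℤ) : ℂ) * (Real.pi:ℂ) * Complex.I / N) •
        (thetaW g N hN).mkQ (MonoidAlgebra.single
          (QuotientGroup.mk ((liftv (redv N p), (0:Fin g → ℤ)), (0:ℤ))) (1:ℂ)) := by
  set L : Fin g → ℤ := liftv (redv N p) with hL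
  have hdvd : ∀ j, (N:ℤ) ∣ (L j - p j) := fun j => dvd_liftv_redv_sub (p j)
  have hB : (HeisMk g L 0 0) * (HeisMk g 0 q (k - ∑ j, p j * q j))
      = HeisMk g L q (k - ∑ j, p j * q j + ∑ j, L j * q j) := by
    rw [Heis.mul_def]
    simp only [HeisMk, Heis.mul_def, symp]
    refine Prod.ext (Prod.ext ?_ ?_) ?_
    · simp
    · simp
    · simp
  have hmk : (QuotientGroup.mk ((((p,q),k)) : Heis g) : Heis g ⧸ GammaN g N hN)
      = (QuotientGroup.mk (HeisMk g L 0 0)) * (QuotientGroup.mk (HeisMk g 0 q (k - ∑ j, p j * q j))) := by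
    rw [← QuotientGroup.mk_mul, hB]
    apply mk_eq_mk hN
    · intro j; exact hdvd j
    · intro j; simp [HeisMk]
    · show (2*(N:ℤ)) ∣ ((k - ∑ j, p j * q j + ∑ j, L j * q j) - k - symp g (p,q) (L, q))
      have hsymp : symp g ((p,q) : HVec g) ((L, q) : HVec g)
          = ∑ j, p j * q j - ∑ j, q j * L j := by
        simp [symp, Finset.sum_sub_distrib]
      rw [hsymp]
      have h1 : (N:ℤ) ∣ ∑ j, (L j - p j) * q j :=
        Finset.dvd_sum fun j _ => (hdvd j).mul_right (q j)
      obtain ⟨t, ht⟩ := h1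
      refine ⟨t, ?_⟩
      have hexp : ∑ j, (L j - p j) * q j = ∑ j, L j * q j - ∑ j, p j * q j := by
        rw [← Finset.sum_sub_distrib]
        exact Finset.sum_congr rfl fun j _ => by ring
      have hql : ∑ j, q j * L j = ∑ j, L j * q j :=
        Finset.sum_congr rfl fun j _ => mul_comm _ _
      rw [hexp] at ht
      rw [hql]
      linarith [ht]
  rw [hmk]
  exact rel_mk (g := g) hN (HeisMk g L 0 0) q (k - ∑ j, p j * q j)

end ThetaAux
section ThetaAux2

variable {g N : ℕ}

/-- the raw inverse map on the Heisenberg group -/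
noncomputable def Fraw (g N : ℕ) [NeZero N] : Heis g → ThetaSp g N := fun x =>
  Complex.exp (((x.2 - ∑ j, x.1.1 j * x.1.2 j : ℤ) : ℂ) * (Real.pi:ℂ) * Complex.I / N) •
    EuclideanSpace.single (redv N x.1.1) (1:ℂ)

lemma Fraw_mul_gamma [NeZero N] (hN : Even N) (a c : Heis g) (hc : c ∈ GammaN g N hN) :
    Fraw g N (a * c) = Fraw g N a := by
  obtain ⟨⟨x, hx⟩, m, hm⟩ := hc
  obtain ⟨X, Y⟩ := x
  obtain ⟨r, hr⟩ := hN
  have hNr : (N:ℤ) = r + r := by exact_mod_cast hr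
  have hc1 : ∀ j, c.1.1 j = N * X j := by
    intro j
    have := congrArg (fun v => v.1 j) hx
    simpa using this
  have hc2 : ∀ j, c.1.2 j = N * Y j := by
    intro j
    have := congrArg (fun v => v.2 j) hx
    simpa using this
  rw [Heis.mul_def]
  unfold Fraw
  simp only []
  have hred : redv N (a.1 + c.1).1 = redv N a.1.1 := by
    funext j
    simp only [redv, Prod.fst_add, Pi.add_apply, hc1]
    push_cast
    simp [ZMod.natCast_self]
  rw [hred]
  congr 1
  apply exp_eq_of_dvd N _ _ ?_
  have hsymp : symp g a.1 c.1
      = (N:ℤ) * ∑ j, a.1.1 j * Y j - (N:ℤ) * ∑ j, a.1.2 j * X j := by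
    simp only [symp, Finset.mul_sum, ← Finset.sum_sub_distrib]
    exact Finset.sum_congr rfl fun j _ => by rw [hc1 j, hc2 j]; ring
  have hsum : ∑ j, (a.1 + c.1).1 j * (a.1 + c.1).2 j
      = ∑ j, a.1.1 j * a.1.2 j + N * ∑ j, a.1.1 j * Y j + N * ∑ j, a.1.2 j * X j
        + N * N * ∑ j, X j * Y j := by
    simp only [Prod.fst_add, Prod.snd_add, Pi.add_apply, Finset.mul_sum]
    rw [← Finset.sum_add_distrib, ← Finset.sum_add_distrib, ← Finset.sum_add_distrib]
    exact Finset.sum_congr rfl fun j _ => by rw [hc1 j, hc2 j]; ring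
  refine ⟨m - (∑ j, a.1.2 j * X j) - r * ∑ j, X j * Y j, ?_⟩
  rw [hsum, hsymp, hm]
  rw [hNr]
  ring

/-- the inverse map on the quotient group -/
noncomputable def Fbar (g N : ℕ) [NeZero N] (hN : Even N) :
    Heis g ⧸ GammaN g N hN → ThetaSp g N :=
  Quotient.lift (Fraw g N) (by
    intro a b hab
    have hab' : a⁻¹ * b ∈ GammaN g N hN := QuotientGroup.leftRel_apply.mp hab
    have := Fraw_mul_gamma hN a (a⁻¹ * b) hab'
    rw [mul_inv_cancel_left] at this
    exact this.symm)

lemma Fbar_mk [NeZero N] (hN : Even N) (x : Heis g) :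
    Fbar g N hN (QuotientGroup.mk x) = Fraw g N x := rfl

/-- the inverse on the monoid algebra -/
noncomputable def PhiAlg (g N : ℕ) [NeZero N] (hN : Even N) :
    HeisAlg g N hN →ₗ[ℂ] ThetaSp g N :=
  Finsupp.lift (ThetaSp g N) ℂ (Heis g ⧸ GammaN g N hN) (Fbar g N hN) ∘ₗ
    (MonoidAlgebra.coeffLinearEquiv ℂ).toLinearMap

lemma PhiAlg_single [NeZero N] (hN : Even N) (z : Heis g ⧸ GammaN g N hN) (c : ℂ) :
    PhiAlg g N hN (MonoidAlgebra.single z c) = c • Fbar g N hN z := by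
  show Finsupp.lift (ThetaSp g N) ℂ (Heis g ⧸ GammaN g N hN) (Fbar g N hN)
      (Finsupp.single z c) = c • Fbar g N hN z
  rw [Finsupp.lift_apply, Finsupp.sum_single_index (by simp)]

lemma PhiAlg_ker [NeZero N] (hN : Even N) :
    thetaW g N hN ≤ LinearMap.ker (PhiAlg g N hN) := by
  rw [thetaW, Submodule.span_le]
  rintro w ⟨x, q, k, rfl⟩
  simp only [SetLike.mem_coe, LinearMap.mem_ker, map_sub, map_smul,
    ← QuotientGroup.mk_mul, PhiAlg_single, Fbar_mk, one_smul]
  erw [← QuotientGroup.mk_mul, Fbar_mk]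
  erw [Heis.mul_def]
  unfold Fraw
  simp only []
  have hred : redv N (x.1 + (((0 : Fin g → ℤ), q), k).1).1 = redv N x.1.1 := by
    funext j
    simp [redv]
  rw [hred]
  rw [smul_smul, ← Complex.exp_add]
  have hsymp : symp g x.1 (((0 : Fin g → ℤ), q), k).1 = ∑ j, x.1.1 j * q j := by
    simp [symp]
  have hsum : ∑ j, (x.1 + (((0 : Fin g → ℤ), q), k).1).1 j * (x.1 + (((0 : Fin g → ℤ), q), k).1).2 j
      = ∑ j, x.1.1 j * x.1.2 j + ∑ j, x.1.1 j * q j := by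
    simp only [Prod.fst_add, Prod.snd_add, Pi.add_apply, ← Finset.sum_add_distrib]
    exact Finset.sum_congr rfl fun j _ => by simp [mul_add]
  rw [sub_eq_zero, hsymp, hsum]
  congr 1
  push_cast
  ring

end ThetaAux2
section ThetaAux3

variable {g N : ℕ}

lemma thetaBasis_apply (g N : ℕ) [NeZero N] (μ : Fin g → ZMod N) :
    thetaBasis g N μ = EuclideanSpace.single μ 1 := by
  rw [thetaBasis, OrthonormalBasis.coe_toBasis, EuclideanSpace.basisFun_apply]

lemma thetaToH_basis (g N : ℕ) [NeZero N] (hN : Even N) (μ : Fin g → ZMod N) :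
    thetaToH g N hN (thetaBasis g N μ)
      = (thetaW g N hN).mkQ (MonoidAlgebra.single
          (QuotientGroup.mk ((liftv μ, (0:Fin g → ℤ)), (0:ℤ))) (1:ℂ)) := by
  unfold thetaToH
  exact Module.Basis.constr_basis _ _ _ _

lemma thetaToH_single (g N : ℕ) [NeZero N] (hN : Even N) (μ : Fin g → ZMod N) :
    thetaToH g N hN (EuclideanSpace.single μ (1:ℂ))
      = (thetaW g N hN).mkQ (MonoidAlgebra.single
          (QuotientGroup.mk ((liftv μ, (0:Fin g → ℤ)), (0:ℤ))) (1:ℂ)) := by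
  rw [← thetaBasis_apply, thetaToH_basis]

lemma mul_L (x : Heis g) (L : Fin g → ℤ) :
    x * HeisMk g L 0 0
      = ((x.1.1 + L, x.1.2), x.2 - ∑ j, x.1.2 j * L j) := by
  rw [Heis.mul_def]
  have hsymp : symp g x.1 (HeisMk g L 0 0).1 = - ∑ j, x.1.2 j * L j := by
    simp only [symp, ← Finset.sum_neg_distrib]
    exact Finset.sum_congr rfl fun j _ => by simp [HeisMk]
  rw [hsymp]
  refine Prod.ext (Prod.ext ?_ ?_) ?_
  · simp [HeisMk]
  · simp [HeisMk]
  · simp [HeisMk]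
    ring

lemma redv_add_liftv [NeZero N] (p : Fin g → ℤ) (μ : Fin g → ZMod N) :
    redv N (p + liftv μ) = μ + redv N p := by
  funext j
  simp only [redv, liftv, Pi.add_apply]
  push_cast
  rw [ZMod.natCast_val, ZMod.cast_id]
  ring

lemma opq_basis (g N : ℕ) [NeZero N] (p q : Fin g → ℤ) (μ : Fin g → ZMod N) :
    Opq g N p q (thetaBasis g N μ)
      = schCoeff g N p q μ • EuclideanSpace.single (μ + redv N p) (1:ℂ) := by
  show (LinearMap.toContinuousLinearMap <|
      (thetaBasis g N).constr ℂ fun ν =>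
        schCoeff g N p q ν • EuclideanSpace.single (ν + fun j => ((p j : ZMod N))) (1 : ℂ))
      (thetaBasis g N μ) = _
  rw [LinearMap.coe_toContinuousLinearMap']
  exact Module.Basis.constr_basis _ _ _ _

end ThetaAux3
section ThetaAux4

variable {g N : ℕ}

lemma mk_mul_L (hN : Even N) (x : Heis g) (L : Fin g → ℤ) :
    (QuotientGroup.mk x : Heis g ⧸ GammaN g N hN) *
        (QuotientGroup.mk ((L, (0:Fin g → ℤ)), (0:ℤ)) : Heis g ⧸ GammaN g N hN)
      = (QuotientGroup.mk ((x.1.1 + L, x.1.2), x.2 - ∑ j, x.1.2 j * L j) :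
          Heis g ⧸ GammaN g N hN) := by
  erw [← QuotientGroup.mk_mul]
  exact congrArg _ (mul_L x L)

lemma hpres (hN : Even N) (z : Heis g ⧸ GammaN g N hN) :
    thetaW g N hN ≤ (thetaW g N hN).comap
      (LinearMap.mulLeft ℂ (MonoidAlgebra.single z (1:ℂ))) := by
  refine QuotientGroup.induction_on z ?_
  intro w
  apply Submodule.span_le.2
  rintro v ⟨x, q, k, rfl⟩
  simp only [SetLike.mem_coe, Submodule.mem_comap, LinearMap.mulLeft_apply]
  simp only [mul_sub, mul_smul_comm, MonoidAlgebra.single_mul_single, one_mul,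
    ← mul_assoc, ← QuotientGroup.mk_mul]
  exact Submodule.subset_span ⟨w * x, q, k, by simp only [← QuotientGroup.mk_mul]⟩

/-- the left-regular action on the quotient -/
noncomputable def actL (g N : ℕ) (hN : Even N) (z : Heis g ⧸ GammaN g N hN) :
    HNgL g N hN →ₗ[ℂ] HNgL g N hN :=
  Submodule.mapQ _ _ (LinearMap.mulLeft ℂ (MonoidAlgebra.single z (1:ℂ))) (hpres hN z)

lemma actL_apply (hN : Even N) (z : Heis g ⧸ GammaN g N hN) (y : HeisAlg g N hN) :
    actL g N hN z ((thetaW g N hN).mkQ y)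
      = (thetaW g N hN).mkQ (MonoidAlgebra.single z (1:ℂ) * y) := by
  rw [Submodule.mkQ_apply, actL, Submodule.mapQ_apply, LinearMap.mulLeft_apply,
    Submodule.mkQ_apply]

end ThetaAux4

/-- The map `e_μ ↦ π_L[(μ,0,0)]` is a `ℂ`-linear isomorphism from `V` to `H_{N,g}(L)`,
equivariant for the Schrödinger representation on `V` and the (well-defined) left regular
action of `H(ℤ_N^g)` on `H_{N,g}(L)`; its inverse sends
`π_L[(p,q,k)] ↦ e^{(k−pᵀq)πi/N} e_{p mod N}`. -/
theorem stmt_5 (g N : ℕ) [NeZero N] (hN : Even N) :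
    Function.Bijective (thetaToH g N hN) ∧
    (∃ act : (Heis g ⧸ GammaN g N hN) → (HNgL g N hN →ₗ[ℂ] HNgL g N hN),
      (∀ (x : Heis g) (y : HeisAlg g N hN),
        act (QuotientGroup.mk x) ((thetaW g N hN).mkQ y)
          = (thetaW g N hN).mkQ (MonoidAlgebra.single (QuotientGroup.mk x) (1 : ℂ) * y)) ∧
      (∀ (x : Heis g) (f : ThetaSp g N),
        thetaToH g N hN
            (Complex.exp ((x.2 : ℂ) * (Real.pi : ℂ) * Complex.I / N) • Opq g N x.1.1 x.1.2 f)
          = act (QuotientGroup.mk x) (thetaToH g N hN f))) ∧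
    ∃ inv : HNgL g N hN →ₗ[ℂ] ThetaSp g N,
      (∀ f : ThetaSp g N, inv (thetaToH g N hN f) = f) ∧
      (∀ y : HNgL g N hN, thetaToH g N hN (inv y) = y) ∧
      (∀ (p q : Fin g → ℤ) (k : ℤ),
        inv ((thetaW g N hN).mkQ (MonoidAlgebra.single (QuotientGroup.mk ((p, q), k)) (1 : ℂ)))
          = Complex.exp ((((k : ℂ) - ∑ j, (p j : ℂ) * (q j : ℂ))) * (Real.pi : ℂ) *
              Complex.I / N) •
            EuclideanSpace.single (fun j => ((p j : ZMod N))) (1 : ℂ)) := by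
  classical
  set invL : HNgL g N hN →ₗ[ℂ] ThetaSp g N :=
    Submodule.liftQ (thetaW g N hN) (PhiAlg g N hN) (PhiAlg_ker hN) with hinvL
  -- the inverse formula on singles
  have hinv_single : ∀ (p q : Fin g → ℤ) (k : ℤ),
      invL ((thetaW g N hN).mkQ (MonoidAlgebra.single (QuotientGroup.mk ((p, q), k)) (1 : ℂ)))
        = Complex.exp ((((k : ℂ) - ∑ j, (p j : ℂ) * (q j : ℂ))) * (Real.pi : ℂ) *
              Complex.I / N) •
            EuclideanSpace.single (fun j => ((p j : ZMod N))) (1 : ℂ) := by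
    intro p q k
    have h1 : invL ((thetaW g N hN).mkQ
          (MonoidAlgebra.single (QuotientGroup.mk ((p, q), k)) (1 : ℂ)))
        = PhiAlg g N hN (MonoidAlgebra.single (QuotientGroup.mk ((p, q), k)) (1 : ℂ)) := by
      rw [hinvL, Submodule.mkQ_apply]
      exact Submodule.liftQ_apply _ _ _
    rw [h1, PhiAlg_single]
    erw [Fbar_mk]
    rw [one_smul]
    show Complex.exp ((((k - ∑ j, p j * q j : ℤ)) : ℂ) * (Real.pi:ℂ) * Complex.I / N) •
        EuclideanSpace.single (fun j => ((p j : ZMod N))) (1:ℂ) = _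
    have harg : ((k - ∑ j, p j * q j : ℤ) : ℂ) = (k:ℂ) - ∑ j, (p j:ℂ) * (q j:ℂ) := by
      push_cast; ring
    rw [harg]
  -- left inverse
  have hleftcomp : invL.comp (thetaToH g N hN) = LinearMap.id := by
    apply Module.Basis.ext (thetaBasis g N)
    intro μ
    rw [LinearMap.comp_apply, LinearMap.id_apply, thetaToH_basis,
      hinv_single (liftv μ) 0 0, thetaBasis_apply]
    have hv : (fun j => ((liftv μ j : ZMod N))) = μ := redv_liftv μ
    rw [hv]
    norm_num
  have hleft : ∀ f, invL (thetaToH g N hN f) = f := fun f => by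
    simpa using LinearMap.congr_fun hleftcomp f
  -- right inverse
  have hcoreb : ∀ (p q : Fin g → ℤ) (k : ℤ) (b : ℂ),
      thetaToH g N hN (invL ((thetaW g N hN).mkQ
          (MonoidAlgebra.single (QuotientGroup.mk ((p, q), k)) b)))
        = (thetaW g N hN).mkQ
          (MonoidAlgebra.single (QuotientGroup.mk ((p, q), k)) b) := by
    intro p q k b
    have h1 : invL ((thetaW g N hN).mkQ
          (MonoidAlgebra.single (QuotientGroup.mk ((p, q), k)) b))
        = PhiAlg g N hN (MonoidAlgebra.single (QuotientGroup.mk ((p, q), k)) b) := by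
      rw [hinvL, Submodule.mkQ_apply]
      exact Submodule.liftQ_apply _ _ _
    rw [h1, PhiAlg_single]
    erw [Fbar_mk]
    rw [map_smul]
    have h2 : thetaToH g N hN (Fraw g N ((p,q),k))
        = (thetaW g N hN).mkQ
          (MonoidAlgebra.single (QuotientGroup.mk ((p, q), k)) (1:ℂ)) := by
      show thetaToH g N hN
          (Complex.exp (((k - ∑ j, p j * q j : ℤ) : ℂ) * (Real.pi:ℂ) * Complex.I / N) •
            EuclideanSpace.single (redv N p) (1:ℂ)) = _
      rw [map_smul, thetaToH_single]
      exact (key hN p q k).symm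
    rw [h2, ← map_smul, MonoidAlgebra.smul_single', mul_one]
  have hrightcomp : (thetaToH g N hN).comp invL = LinearMap.id := by
    apply Submodule.linearMap_qext
    apply MonoidAlgebra.lhom_ext'
    intro a
    apply LinearMap.ext
    intro b
    refine QuotientGroup.induction_on a ?_
    intro x
    obtain ⟨⟨p, q⟩, k⟩ := x
    simp only [LinearMap.comp_apply, LinearMap.id_apply, MonoidAlgebra.lsingle_apply]
    exact hcoreb p q k b
  have hright : ∀ y, thetaToH g N hN (invL y) = y := fun y => by
    simpa using LinearMap.congr_fun hrightcomp y
  refine ⟨⟨fun u v huv => by rw [← hleft u, huv, hleft v],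
      fun y => ⟨invL y, hright y⟩⟩, ?_, invL, hleft, hright, hinv_single⟩
  -- the action
  refine ⟨actL g N hN, fun x y => actL_apply hN _ y, ?_⟩
  intro x f
  obtain ⟨⟨p, q⟩, k⟩ := x
  dsimp only
  -- basis computation
  have hbase : ∀ μ : Fin g → ZMod N,
      thetaToH g N hN (Complex.exp ((k:ℂ) * (Real.pi:ℂ) * Complex.I / N) •
          Opq g N p q (thetaBasis g N μ))
        = actL g N hN (QuotientGroup.mk (((p,q),k)))
            (thetaToH g N hN (thetaBasis g N μ)) := by
    intro μ
    rw [map_smul, opq_basis, map_smul, smul_smul, thetaToH_single]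
    rw [thetaToH_basis, actL_apply hN, MonoidAlgebra.single_mul_single, one_mul]
    erw [mk_mul_L hN]
    dsimp only
    conv_rhs => rw [key hN (p + liftv μ) q (k - ∑ j, q j * liftv μ j)]
    rw [redv_add_liftv p μ]
    congr 1
    rw [schCoeff, ← Complex.exp_add]
    congr 1
    have hs1 : ((∑ j, q j * liftv μ j : ℤ) : ℂ) = ∑ j, ((μ j).val:ℂ) * (q j:ℂ) := by
      push_cast [liftv]
      exact Finset.sum_congr rfl fun j _ => by ring
    have hs2 : ((∑ j, (p + liftv μ) j * q j : ℤ) : ℂ)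
        = ∑ j, (p j:ℂ) * (q j:ℂ) + ∑ j, ((μ j).val:ℂ) * (q j:ℂ) := by
      push_cast [liftv, Pi.add_apply]
      rw [← Finset.sum_add_distrib]
      exact Finset.sum_congr rfl fun j _ => by ring
    push_cast [hs1, hs2]
    ring
  have hmaps : (Complex.exp ((k:ℂ) * (Real.pi:ℂ) * Complex.I / N) •
        ((thetaToH g N hN).comp ((Opq g N p q).toLinearMap)))
      = (actL g N hN (QuotientGroup.mk (((p,q),k)))).comp (thetaToH g N hN) := by
    apply Module.Basis.ext (thetaBasis g N)
    intro μ
    simp only [LinearMap.smul_apply, LinearMap.comp_apply,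
      ContinuousLinearMap.coe_coe]
    rw [← map_smul]
    exact hbase μ
  have := LinearMap.congr_fun hmaps f
  simp only [LinearMap.smul_apply, LinearMap.comp_apply,
    ContinuousLinearMap.coe_coe] at this
  rw [map_smul]
  exact this
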